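/- arXiv:1011.1518 — 2 statements merged into one kernel-verified Lean document; each statement's English description precedes it below -/
import Mathlib

section
/- Let U ∈ ℝ^{m×r} and V ∈ ℝ^{n×r} have orthonormal columns, and define the linear map P_T(M) = UUᵀM + MVVᵀ − UUᵀMVVᵀ on ℝ^{m×n}. Then for any M and any ρ > 0, the entry-wise infinity norm of P_T(M) satisfies ‖P_T(M)‖_∞ ≤ ‖UUᵀ‖_∞‖M‖_{1→1} + ‖VVᵀ‖_∞‖M‖_{∞→∞} + ‖U‖_{2→∞}‖V‖_{2→∞}‖M‖_{2→2}. -/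
open scoped BigOperators
open Matrix
noncomputable section

namespace SLR

/-- Trace inner product `⟨A,B⟩ = tr(AᵀB)`. -/
def inner' {m n : ℕ} (A B : Matrix (Fin m) (Fin n) ℝ) : ℝ := ∑ i, ∑ j, A i j * B i j

/-- Entrywise 1-norm. -/
def l1 {m n : ℕ} (M : Matrix (Fin m) (Fin n) ℝ) : ℝ := ∑ i, ∑ j, |M i j|

/-- Entrywise ∞-norm (maximum absolute value of an entry). -/
def linf {m n : ℕ} (M : Matrix (Fin m) (Fin n) ℝ) : ℝ := ⨆ i, ⨆ j, |M i j|

/-- Frobenius norm. -/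
def frob {m n : ℕ} (M : Matrix (Fin m) (Fin n) ℝ) : ℝ :=
  Real.sqrt (∑ i, ∑ j, (M i j) ^ 2)

/-- `‖M‖_{1→1}`: maximum column absolute sum. -/
def n11 {m n : ℕ} (M : Matrix (Fin m) (Fin n) ℝ) : ℝ := ⨆ j, ∑ i, |M i j|

/-- `‖M‖_{∞→∞}`: maximum row absolute sum. -/
def nII {m n : ℕ} (M : Matrix (Fin m) (Fin n) ℝ) : ℝ := ⨆ i, ∑ j, |M i j|

/-- Spectral norm `‖M‖_{2→2}`. -/
def spec {m n : ℕ} (M : Matrix (Fin m) (Fin n) ℝ) : ℝ :=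
  ‖LinearMap.toContinuousLinearMap (Matrix.toEuclideanLin M)‖

/-- Trace (nuclear) norm: sum of singular values. -/
def traceNorm {m n : ℕ} (M : Matrix (Fin m) (Fin n) ℝ) : ℝ :=
  ∑ i, Real.sqrt ((show (Mᵀ * M).IsHermitian by
    simpa [Matrix.conjTranspose_eq_transpose_of_trivial] using
      Matrix.isHermitian_conjTranspose_mul_self M).eigenvalues i)

/-- The hybrid norm `‖M‖_{♯(ρ)} = max{ρ‖M‖_{1→1}, ρ⁻¹‖M‖_{∞→∞}}`. -/
def sharp {m n : ℕ} (ρ : ℝ) (M : Matrix (Fin m) (Fin n) ℝ) : ℝ :=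
  max (ρ * n11 M) (ρ⁻¹ * nII M)

/-- The dual norm `‖·‖_{♭(ρ)}` of `‖·‖_{♯(ρ)}`. -/
def flat {m n : ℕ} (ρ : ℝ) (M : Matrix (Fin m) (Fin n) ℝ) : ℝ :=
  sSup {x : ℝ | ∃ N : Matrix (Fin m) (Fin n) ℝ, sharp ρ N ≤ 1 ∧ x = inner' M N}

/-- Induced operator norm of a map `T` with respect to the norm `f`. -/
def opNormWrt {m n : ℕ} (f : Matrix (Fin m) (Fin n) ℝ → ℝ)
    (T : Matrix (Fin m) (Fin n) ℝ → Matrix (Fin m) (Fin n) ℝ) : ℝ :=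
  sSup {x : ℝ | ∃ M, f M ≤ 1 ∧ x = f (T M)}

/-- Entrywise sign matrix. -/
def signM {m n : ℕ} (M : Matrix (Fin m) (Fin n) ℝ) : Matrix (Fin m) (Fin n) ℝ :=
  Matrix.of fun i j => Real.sign (M i j)

/-- Orthogonal projection onto matrices supported on `supp X`. -/
def POmega {m n : ℕ} (X : Matrix (Fin m) (Fin n) ℝ) (M : Matrix (Fin m) (Fin n) ℝ) :
    Matrix (Fin m) (Fin n) ℝ :=
  Matrix.of fun i j => if X i j ≠ 0 then M i j else 0

/-- Orthogonal projection onto the tangent space `T` determined by `U`, `V`. -/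
def PT {m n r : ℕ} (U : Matrix (Fin m) (Fin r) ℝ) (V : Matrix (Fin n) (Fin r) ℝ)
    (M : Matrix (Fin m) (Fin n) ℝ) : Matrix (Fin m) (Fin n) ℝ :=
  U * Uᵀ * M + M * (V * Vᵀ) - U * Uᵀ * M * (V * Vᵀ)

/-- `‖U‖_{2→∞}`: maximum row Euclidean norm. -/
def two2inf {m r : ℕ} (U : Matrix (Fin m) (Fin r) ℝ) : ℝ :=
  ⨆ i, Real.sqrt (∑ k, (U i k) ^ 2)

/-- The sparsity measure `α(ρ)` of `X̄_S`. -/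
def alpha {m n : ℕ} (X : Matrix (Fin m) (Fin n) ℝ) (ρ : ℝ) : ℝ :=
  max (ρ * n11 (signM X)) (ρ⁻¹ * nII (signM X))

/-- The incoherence measure `β(ρ)` of the singular vectors `U`, `V`. -/
def beta {m n r : ℕ} (U : Matrix (Fin m) (Fin r) ℝ) (V : Matrix (Fin n) (Fin r) ℝ)
    (ρ : ℝ) : ℝ :=
  ρ⁻¹ * linf (U * Uᵀ) + ρ * linf (V * Vᵀ) + two2inf U * two2inf V

/-- Number of nonzero entries. -/
def suppCard {m n : ℕ} (X : Matrix (Fin m) (Fin n) ℝ) : ℕ :=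
  (Finset.univ.filter fun p : Fin m × Fin n => X p.1 p.2 ≠ 0).card

private lemma abs_entry_le_linf {m n : ℕ} (A : Matrix (Fin m) (Fin n) ℝ) (i : Fin m)
    (j : Fin n) : |A i j| ≤ linf A := by
  have h1 : |A i j| ≤ ⨆ j', |A i j'| :=
    le_ciSup (f := fun j' => |A i j'|) (Set.Finite.bddAbove (Set.finite_range _)) j
  exact h1.trans (le_ciSup (f := fun i' => ⨆ j', |A i' j'|)
    (Set.Finite.bddAbove (Set.finite_range _)) i)

private lemma linf_nonneg' {m n : ℕ} (A : Matrix (Fin m) (Fin n) ℝ) : 0 ≤ linf A :=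
  Real.iSup_nonneg fun _ => Real.iSup_nonneg fun _ => abs_nonneg _

private lemma n11_nonneg' {m n : ℕ} (A : Matrix (Fin m) (Fin n) ℝ) : 0 ≤ n11 A :=
  Real.iSup_nonneg fun _ => Finset.sum_nonneg fun _ _ => abs_nonneg _

private lemma nII_nonneg' {m n : ℕ} (A : Matrix (Fin m) (Fin n) ℝ) : 0 ≤ nII A :=
  Real.iSup_nonneg fun _ => Finset.sum_nonneg fun _ _ => abs_nonneg _

private lemma two2inf_nonneg' {m r : ℕ} (U : Matrix (Fin m) (Fin r) ℝ) : 0 ≤ two2inf U :=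
  Real.iSup_nonneg fun _ => Real.sqrt_nonneg _

private lemma spec_nonneg' {m n : ℕ} (M : Matrix (Fin m) (Fin n) ℝ) : 0 ≤ spec M :=
  norm_nonneg _

private lemma colsum_le_n11 {m n : ℕ} (M : Matrix (Fin m) (Fin n) ℝ) (j : Fin n) :
    ∑ i, |M i j| ≤ n11 M :=
  le_ciSup (f := fun j' => ∑ i, |M i j'|) (Set.Finite.bddAbove (Set.finite_range _)) j

private lemma rowsum_le_nII {m n : ℕ} (M : Matrix (Fin m) (Fin n) ℝ) (i : Fin m) :
    ∑ j, |M i j| ≤ nII M :=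
  le_ciSup (f := fun i' => ∑ j, |M i' j|) (Set.Finite.bddAbove (Set.finite_range _)) i

private lemma rowSq {p r : ℕ} (W : Matrix (Fin p) (Fin r) ℝ) (hW : Wᵀ * W = 1) (i : Fin p) :
    ∑ a, ((W * Wᵀ) i a) ^ 2 = ∑ k, (W i k) ^ 2 := by
  have h : (W * Wᵀ) * (W * Wᵀ) = W * Wᵀ := by
    rw [Matrix.mul_assoc, ← Matrix.mul_assoc Wᵀ W Wᵀ, hW, Matrix.one_mul]
  have hsym : ∀ a, (W * Wᵀ) a i = (W * Wᵀ) i a := fun a => by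
    simp [Matrix.mul_apply, Matrix.transpose_apply, mul_comm]
  calc ∑ a, ((W * Wᵀ) i a) ^ 2 = ∑ a, (W * Wᵀ) i a * (W * Wᵀ) a i := by
        simp [sq, hsym]
    _ = ((W * Wᵀ) * (W * Wᵀ)) i i := (Matrix.mul_apply).symm
    _ = (W * Wᵀ) i i := by rw [h]
    _ = ∑ k, (W i k) ^ 2 := by simp [Matrix.mul_apply, Matrix.transpose_apply, sq]

private lemma boundA {m n r : ℕ} (U : Matrix (Fin m) (Fin r) ℝ)
    (M : Matrix (Fin m) (Fin n) ℝ) (i : Fin m) (j : Fin n) :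
    |(U * Uᵀ * M) i j| ≤ linf (U * Uᵀ) * n11 M := by
  rw [Matrix.mul_apply]
  calc |∑ a, (U * Uᵀ) i a * M a j| ≤ ∑ a, |(U * Uᵀ) i a * M a j| :=
        Finset.abs_sum_le_sum_abs _ _
    _ ≤ ∑ a, linf (U * Uᵀ) * |M a j| := Finset.sum_le_sum fun a _ => by
        rw [abs_mul]
        exact mul_le_mul_of_nonneg_right (abs_entry_le_linf _ _ _) (abs_nonneg _)
    _ = linf (U * Uᵀ) * ∑ a, |M a j| := by rw [Finset.mul_sum]
    _ ≤ linf (U * Uᵀ) * n11 M :=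
        mul_le_mul_of_nonneg_left (colsum_le_n11 M j) (linf_nonneg' _)

private lemma boundB {m n r : ℕ} (V : Matrix (Fin n) (Fin r) ℝ)
    (M : Matrix (Fin m) (Fin n) ℝ) (i : Fin m) (j : Fin n) :
    |(M * (V * Vᵀ)) i j| ≤ linf (V * Vᵀ) * nII M := by
  rw [Matrix.mul_apply]
  calc |∑ b, M i b * (V * Vᵀ) b j| ≤ ∑ b, |M i b * (V * Vᵀ) b j| :=
        Finset.abs_sum_le_sum_abs _ _
    _ ≤ ∑ b, |M i b| * linf (V * Vᵀ) := Finset.sum_le_sum fun b _ => by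
        rw [abs_mul]
        exact mul_le_mul_of_nonneg_left (abs_entry_le_linf _ _ _) (abs_nonneg _)
    _ = (∑ b, |M i b|) * linf (V * Vᵀ) := by rw [Finset.sum_mul]
    _ ≤ nII M * linf (V * Vᵀ) :=
        mul_le_mul_of_nonneg_right (rowsum_le_nII M i) (linf_nonneg' _)
    _ = linf (V * Vᵀ) * nII M := mul_comm _ _

open scoped RealInnerProductSpace in
private lemma boundC {m n r : ℕ} (U : Matrix (Fin m) (Fin r) ℝ)
    (V : Matrix (Fin n) (Fin r) ℝ) (hU : Uᵀ * U = 1) (hV : Vᵀ * V = 1)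
    (M : Matrix (Fin m) (Fin n) ℝ) (i : Fin m) (j : Fin n) :
    |(U * Uᵀ * M * (V * Vᵀ)) i j| ≤ two2inf U * two2inf V * spec M := by
  classical
  set u : EuclideanSpace ℝ (Fin m) := (WithLp.equiv 2 (Fin m → ℝ)).symm
    (fun a => (U * Uᵀ) i a) with hu_def
  set x : EuclideanSpace ℝ (Fin n) := (WithLp.equiv 2 (Fin n → ℝ)).symm
    (fun b => (V * Vᵀ) b j) with hx_def
  have hentry : (U * Uᵀ * M * (V * Vᵀ)) i j = (inner ℝ u ((Matrix.toEuclideanLin M) x) : ℝ) := by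
    have hrhs : (inner ℝ u ((Matrix.toEuclideanLin M) x) : ℝ)
        = ∑ a, (U * Uᵀ) i a * ∑ b, M a b * (V * Vᵀ) b j := by
      simp only [hu_def, hx_def, WithLp.equiv_symm_apply, Matrix.toEuclideanLin_apply_piLp_toLp,
        PiLp.inner_apply, RCLike.inner_apply, conj_trivial, PiLp.toLp_apply,
        Matrix.mulVec, dotProduct]
      exact Finset.sum_congr rfl fun _ _ => mul_comm _ _
    rw [hrhs, Matrix.mul_apply]
    have hmb : ∀ b, (U * Uᵀ * M) i b = ∑ a, (U * Uᵀ) i a * M a b :=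
      fun b => Matrix.mul_apply
    simp only [hmb]
    simp only [Finset.sum_mul, Finset.mul_sum]
    rw [Finset.sum_comm]
    apply Finset.sum_congr rfl
    intro a _
    apply Finset.sum_congr rfl
    intro b _
    ring
  have hu : ‖u‖ ≤ two2inf U := by
    have hnorm : ‖u‖ = Real.sqrt (∑ k, (U i k) ^ 2) := by
      rw [EuclideanSpace.norm_eq]
      congr 1
      rw [← rowSq U hU i]
      apply Finset.sum_congr rfl
      intro a _
      simp [hu_def, WithLp.equiv_symm_apply, PiLp.toLp_apply, sq_abs]
    rw [hnorm]
    exact le_ciSup (f := fun i' => Real.sqrt (∑ k, (U i' k) ^ 2))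
      (Set.Finite.bddAbove (Set.finite_range _)) i
  have hx : ‖x‖ ≤ two2inf V := by
    have hnorm : ‖x‖ = Real.sqrt (∑ l, (V j l) ^ 2) := by
      rw [EuclideanSpace.norm_eq]
      congr 1
      rw [← rowSq V hV j]
      apply Finset.sum_congr rfl
      intro b _
      have : (V * Vᵀ) b j = (V * Vᵀ) j b := by
        simp [Matrix.mul_apply, Matrix.transpose_apply, mul_comm]
      simp [hx_def, WithLp.equiv_symm_apply, PiLp.toLp_apply, sq_abs, this]
    rw [hnorm]
    exact le_ciSup (f := fun j' => Real.sqrt (∑ l, (V j' l) ^ 2))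
      (Set.Finite.bddAbove (Set.finite_range _)) j
  have hop : ‖(Matrix.toEuclideanLin M) x‖ ≤ spec M * ‖x‖ := by
    have h := (LinearMap.toContinuousLinearMap (Matrix.toEuclideanLin M)).le_opNorm x
    simpa [spec] using h
  calc |(U * Uᵀ * M * (V * Vᵀ)) i j| = |(inner ℝ u ((Matrix.toEuclideanLin M) x) : ℝ)| := by
        rw [hentry]
    _ ≤ ‖u‖ * ‖(Matrix.toEuclideanLin M) x‖ := abs_real_inner_le_norm _ _
    _ ≤ ‖u‖ * (spec M * ‖x‖) :=
        mul_le_mul_of_nonneg_left hop (norm_nonneg _)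
    _ ≤ two2inf U * (spec M * two2inf V) := by
        apply mul_le_mul hu _ (mul_nonneg (spec_nonneg' M) (norm_nonneg _)) (two2inf_nonneg' U)
        exact mul_le_mul_of_nonneg_left hx (spec_nonneg' M)
    _ = two2inf U * two2inf V * spec M := by ring

/-- entrywise ∞-norm bound for the tangent-space projection. -/
theorem PT_linf_bound {m n r : ℕ} (U : Matrix (Fin m) (Fin r) ℝ)
    (V : Matrix (Fin n) (Fin r) ℝ) (hU : Uᵀ * U = 1) (hV : Vᵀ * V = 1)
    (M : Matrix (Fin m) (Fin n) ℝ) (ρ : ℝ) (hρ : 0 < ρ) :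
    linf (PT U V M) ≤
      linf (U * Uᵀ) * n11 M + linf (V * Vᵀ) * nII M
        + two2inf U * two2inf V * spec M := by
  have hC0 : 0 ≤ linf (U * Uᵀ) * n11 M + linf (V * Vᵀ) * nII M
      + two2inf U * two2inf V * spec M := by
    have := mul_nonneg (linf_nonneg' (U * Uᵀ)) (n11_nonneg' M)
    have := mul_nonneg (linf_nonneg' (V * Vᵀ)) (nII_nonneg' M)
    have := mul_nonneg (mul_nonneg (two2inf_nonneg' U) (two2inf_nonneg' V)) (spec_nonneg' M)
    linarith
  rw [linf]
  apply Real.iSup_le _ hC0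
  intro i
  apply Real.iSup_le _ hC0
  intro j
  have hPT : PT U V M i j
      = (U * Uᵀ * M) i j + (M * (V * Vᵀ)) i j - (U * Uᵀ * M * (V * Vᵀ)) i j := by
    simp [PT, Matrix.add_apply, Matrix.sub_apply]
  rw [hPT]
  calc |(U * Uᵀ * M) i j + (M * (V * Vᵀ)) i j - (U * Uᵀ * M * (V * Vᵀ)) i j|
      ≤ |(U * Uᵀ * M) i j + (M * (V * Vᵀ)) i j| + |(U * Uᵀ * M * (V * Vᵀ)) i j| :=
        abs_sub _ _
    _ ≤ |(U * Uᵀ * M) i j| + |(M * (V * Vᵀ)) i j| + |(U * Uᵀ * M * (V * Vᵀ)) i j| := by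
        have := abs_add_le ((U * Uᵀ * M) i j) ((M * (V * Vᵀ)) i j)
        linarith
    _ ≤ linf (U * Uᵀ) * n11 M + linf (V * Vᵀ) * nII M + two2inf U * two2inf V * spec M :=
        add_le_add (add_le_add (boundA U M i j) (boundB V M i j)) (boundC U V hU hV M i j)

end SLR
end
end

section
/- With the notation of rank-sparsity incoherence, for every ρ > 0, and every matrix M ∈ ℝ^{m×n}, ‖P_Ω(P_T(M))‖_{ℓ1} ≤ α(ρ)β(ρ)‖M‖_{ℓ1}, where ‖·‖_{ℓ1} denotes the entry-wise 1-norm (sum of absolute values of entries). -/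
open scoped BigOperators
open Matrix
noncomputable section

namespace SLR

private lemma le_ciSup_fin {k : ℕ} (f : Fin k → ℝ) (i : Fin k) : f i ≤ ⨆ j, f j :=
  le_ciSup (Set.Finite.bddAbove (Set.finite_range f)) i

private lemma key1 {m n : ℕ} (χ : Fin m → Fin n → ℝ) (A : Matrix (Fin m) (Fin m) ℝ)
    (M : Matrix (Fin m) (Fin n) ℝ) (p a : ℝ)
    (hχ0 : ∀ i j, 0 ≤ χ i j) (hA : ∀ i k, |A i k| ≤ p)
    (hcol : ∀ j, ∑ i, χ i j ≤ a) (hp : 0 ≤ p) :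
    ∑ i, ∑ j, χ i j * |(A * M) i j| ≤ p * a * l1 M := by
  have h1 : ∀ i j, χ i j * |(A * M) i j| ≤ ∑ k, χ i j * (p * |M k j|) := by
    intro i j
    calc χ i j * |(A * M) i j| ≤ χ i j * ∑ k, |A i k| * |M k j| := by
          refine mul_le_mul_of_nonneg_left ?_ (hχ0 i j)
          rw [Matrix.mul_apply]
          exact (Finset.abs_sum_le_sum_abs _ _).trans (le_of_eq (by simp [abs_mul]))
      _ = ∑ k, χ i j * (|A i k| * |M k j|) := Finset.mul_sum _ _ _
      _ ≤ ∑ k, χ i j * (p * |M k j|) := by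
          refine Finset.sum_le_sum fun k _ => mul_le_mul_of_nonneg_left
            (mul_le_mul_of_nonneg_right (hA i k) (abs_nonneg _)) (hχ0 i j)
  calc ∑ i, ∑ j, χ i j * |(A * M) i j| ≤ ∑ i, ∑ j, ∑ k, χ i j * (p * |M k j|) :=
        Finset.sum_le_sum fun i _ => Finset.sum_le_sum fun j _ => h1 i j
    _ = ∑ j, (∑ i, χ i j) * (∑ k, p * |M k j|) := by
        rw [Finset.sum_comm]
        exact Finset.sum_congr rfl fun j _ => (Finset.sum_mul_sum _ _ _ _).symm
    _ ≤ ∑ j, a * (∑ k, p * |M k j|) := by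
        refine Finset.sum_le_sum fun j _ => mul_le_mul_of_nonneg_right (hcol j)
          (Finset.sum_nonneg fun k _ => mul_nonneg hp (abs_nonneg _))
    _ = p * a * l1 M := by
        have hl : l1 M = ∑ j, ∑ k, |M k j| := Finset.sum_comm
        rw [hl, Finset.mul_sum]
        exact Finset.sum_congr rfl fun j _ => by rw [← Finset.mul_sum]; ring

private lemma key2 {m n : ℕ} (χ : Fin m → Fin n → ℝ) (B : Matrix (Fin n) (Fin n) ℝ)
    (M : Matrix (Fin m) (Fin n) ℝ) (q b : ℝ)
    (hχ0 : ∀ i j, 0 ≤ χ i j) (hB : ∀ l j, |B l j| ≤ q)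
    (hrow : ∀ i, ∑ j, χ i j ≤ b) (hq : 0 ≤ q) :
    ∑ i, ∑ j, χ i j * |(M * B) i j| ≤ q * b * l1 M := by
  have h1 : ∀ i j, χ i j * |(M * B) i j| ≤ ∑ l, χ i j * (q * |M i l|) := by
    intro i j
    calc χ i j * |(M * B) i j| ≤ χ i j * ∑ l, |M i l| * |B l j| := by
          refine mul_le_mul_of_nonneg_left ?_ (hχ0 i j)
          rw [Matrix.mul_apply]
          exact (Finset.abs_sum_le_sum_abs _ _).trans (le_of_eq (by simp [abs_mul]))
      _ = ∑ l, χ i j * (|M i l| * |B l j|) := Finset.mul_sum _ _ _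
      _ ≤ ∑ l, χ i j * (q * |M i l|) := by
          refine Finset.sum_le_sum fun l _ => mul_le_mul_of_nonneg_left ?_ (hχ0 i j)
          rw [mul_comm (q : ℝ)]
          exact mul_le_mul_of_nonneg_left (hB l j) (abs_nonneg _)
  calc ∑ i, ∑ j, χ i j * |(M * B) i j| ≤ ∑ i, ∑ j, ∑ l, χ i j * (q * |M i l|) :=
        Finset.sum_le_sum fun i _ => Finset.sum_le_sum fun j _ => h1 i j
    _ = ∑ i, (∑ j, χ i j) * (∑ l, q * |M i l|) :=
        Finset.sum_congr rfl fun i _ => (Finset.sum_mul_sum _ _ _ _).symm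
    _ ≤ ∑ i, b * (∑ l, q * |M i l|) := by
        refine Finset.sum_le_sum fun i _ => mul_le_mul_of_nonneg_right (hrow i)
          (Finset.sum_nonneg fun l _ => mul_nonneg hq (abs_nonneg _))
    _ = q * b * l1 M := by
        rw [l1, Finset.mul_sum]
        exact Finset.sum_congr rfl fun i _ => by rw [← Finset.mul_sum]; ring

set_option maxHeartbeats 1000000 in
private lemma key3 {m n : ℕ} (χ : Fin m → Fin n → ℝ) (A : Matrix (Fin m) (Fin m) ℝ)
    (B : Matrix (Fin n) (Fin n) ℝ) (M : Matrix (Fin m) (Fin n) ℝ) (a b tU tV : ℝ)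
    (hχ : ∀ i j, χ i j * χ i j = χ i j) (hχ0 : ∀ i j, 0 ≤ χ i j)
    (hA2 : ∀ k, ∑ i, (A i k) ^ 2 ≤ tU ^ 2) (hB2 : ∀ l, ∑ j, (B l j) ^ 2 ≤ tV ^ 2)
    (hcol : ∀ j, ∑ i, χ i j ≤ a) (hrow : ∀ i, ∑ j, χ i j ≤ b)
    (ha : 0 ≤ a) (hb : 0 ≤ b) (htU : 0 ≤ tU) (htV : 0 ≤ tV) :
    ∑ i, ∑ j, χ i j * |(A * M * B) i j| ≤
      Real.sqrt a * Real.sqrt b * (tU * tV) * l1 M := by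
  set C := Real.sqrt a * Real.sqrt b * (tU * tV) with hC
  have hC0 : 0 ≤ C := by positivity
  have hS : ∀ (k : Fin m) (l : Fin n), ∑ i, ∑ j, χ i j * (|A i k| * |B l j|) ≤ C := by
    intro k l
    have hS0 : 0 ≤ ∑ i, ∑ j, χ i j * (|A i k| * |B l j|) :=
      Finset.sum_nonneg fun i _ => Finset.sum_nonneg fun j _ =>
        mul_nonneg (hχ0 i j) (mul_nonneg (abs_nonneg _) (abs_nonneg _))
    have hprod : ∑ i, ∑ j, χ i j * (|A i k| * |B l j|) =
        ∑ p : Fin m × Fin n, (χ p.1 p.2 * |A p.1 k|) * (χ p.1 p.2 * |B l p.2|) := by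
      rw [Fintype.sum_prod_type]
      refine Finset.sum_congr rfl fun i _ => Finset.sum_congr rfl fun j _ => ?_
      rw [mul_mul_mul_comm, hχ i j]
    have hCS := Finset.sum_mul_sq_le_sq_mul_sq Finset.univ
      (fun p : Fin m × Fin n => χ p.1 p.2 * |A p.1 k|)
      (fun p : Fin m × Fin n => χ p.1 p.2 * |B l p.2|)
    have hf : ∑ p : Fin m × Fin n, (χ p.1 p.2 * |A p.1 k|) ^ 2 ≤ b * tU ^ 2 := by
      rw [Fintype.sum_prod_type]
      calc ∑ i, ∑ j, (χ i j * |A i k|) ^ 2 = ∑ i, (A i k) ^ 2 * ∑ j, χ i j := by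
            refine Finset.sum_congr rfl fun i _ => ?_
            rw [Finset.mul_sum]
            refine Finset.sum_congr rfl fun j _ => ?_
            rw [mul_pow, sq_abs, sq, hχ i j]; ring
        _ ≤ ∑ i, (A i k) ^ 2 * b :=
            Finset.sum_le_sum fun i _ => mul_le_mul_of_nonneg_left (hrow i) (sq_nonneg _)
        _ = (∑ i, (A i k) ^ 2) * b := (Finset.sum_mul _ _ _).symm
        _ ≤ tU ^ 2 * b := mul_le_mul_of_nonneg_right (hA2 k) hb
        _ = b * tU ^ 2 := mul_comm _ _
    have hg : ∑ p : Fin m × Fin n, (χ p.1 p.2 * |B l p.2|) ^ 2 ≤ a * tV ^ 2 := by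
      rw [Fintype.sum_prod_type, Finset.sum_comm]
      calc ∑ j, ∑ i, (χ i j * |B l j|) ^ 2 = ∑ j, (B l j) ^ 2 * ∑ i, χ i j := by
            refine Finset.sum_congr rfl fun j _ => ?_
            rw [Finset.mul_sum]
            refine Finset.sum_congr rfl fun i _ => ?_
            rw [mul_pow, sq_abs, sq, hχ i j]; ring
        _ ≤ ∑ j, (B l j) ^ 2 * a :=
            Finset.sum_le_sum fun j _ => mul_le_mul_of_nonneg_left (hcol j) (sq_nonneg _)
        _ = (∑ j, (B l j) ^ 2) * a := (Finset.sum_mul _ _ _).symm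
        _ ≤ tV ^ 2 * a := mul_le_mul_of_nonneg_right (hB2 l) ha
        _ = a * tV ^ 2 := mul_comm _ _
    have h2 : (∑ i, ∑ j, χ i j * (|A i k| * |B l j|)) ^ 2 ≤ C ^ 2 := by
      calc (∑ i, ∑ j, χ i j * (|A i k| * |B l j|)) ^ 2
          = (∑ p : Fin m × Fin n, (χ p.1 p.2 * |A p.1 k|) * (χ p.1 p.2 * |B l p.2|)) ^ 2 := by
            rw [hprod]
        _ ≤ (∑ p : Fin m × Fin n, (χ p.1 p.2 * |A p.1 k|) ^ 2) *
            (∑ p : Fin m × Fin n, (χ p.1 p.2 * |B l p.2|) ^ 2) := hCS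
        _ ≤ (b * tU ^ 2) * (a * tV ^ 2) := by
            refine mul_le_mul hf hg (Finset.sum_nonneg fun p _ => sq_nonneg _) (by positivity)
        _ = C ^ 2 := by
            rw [hC, mul_pow, mul_pow, Real.sq_sqrt ha, Real.sq_sqrt hb]; ring
    calc ∑ i, ∑ j, χ i j * (|A i k| * |B l j|)
        = Real.sqrt ((∑ i, ∑ j, χ i j * (|A i k| * |B l j|)) ^ 2) := (Real.sqrt_sq hS0).symm
      _ ≤ Real.sqrt (C ^ 2) := Real.sqrt_le_sqrt h2
      _ = C := Real.sqrt_sq hC0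
  have hent : ∀ i j, |(A * M * B) i j| ≤
      ∑ q : Fin m × Fin n, |A i q.1| * |B q.2 j| * |M q.1 q.2| := by
    intro i j
    have h3 : (A * M * B) i j = ∑ l, ∑ k, A i k * M k l * B l j := by
      simp only [Matrix.mul_apply, Finset.sum_mul]
    rw [h3, Fintype.sum_prod_type, Finset.sum_comm]
    refine (Finset.abs_sum_le_sum_abs _ _).trans ?_
    refine Finset.sum_le_sum fun l _ => ?_
    refine (Finset.abs_sum_le_sum_abs _ _).trans (le_of_eq ?_)
    refine Finset.sum_congr rfl fun k _ => ?_
    rw [abs_mul, abs_mul]; ring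
  calc ∑ i, ∑ j, χ i j * |(A * M * B) i j|
      = ∑ p : Fin m × Fin n, χ p.1 p.2 * |(A * M * B) p.1 p.2| :=
        (Fintype.sum_prod_type
          (f := fun p : Fin m × Fin n => χ p.1 p.2 * |(A * M * B) p.1 p.2|)).symm
    _ ≤ ∑ p : Fin m × Fin n, ∑ q : Fin m × Fin n,
          (χ p.1 p.2 * (|A p.1 q.1| * |B q.2 p.2|)) * |M q.1 q.2| := by
        refine Finset.sum_le_sum fun p _ => ?_
        calc χ p.1 p.2 * |(A * M * B) p.1 p.2|
            ≤ χ p.1 p.2 * ∑ q : Fin m × Fin n, |A p.1 q.1| * |B q.2 p.2| * |M q.1 q.2| :=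
              mul_le_mul_of_nonneg_left (hent p.1 p.2) (hχ0 _ _)
          _ = ∑ q : Fin m × Fin n, (χ p.1 p.2 * (|A p.1 q.1| * |B q.2 p.2|)) * |M q.1 q.2| := by
              rw [Finset.mul_sum]
              exact Finset.sum_congr rfl fun q _ => by ring
    _ = ∑ q : Fin m × Fin n,
          (∑ p : Fin m × Fin n, χ p.1 p.2 * (|A p.1 q.1| * |B q.2 p.2|)) * |M q.1 q.2| := by
        rw [Finset.sum_comm]
        exact Finset.sum_congr rfl fun q _ => by rw [Finset.sum_mul]
    _ ≤ ∑ q : Fin m × Fin n, C * |M q.1 q.2| := by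
        refine Finset.sum_le_sum fun q _ => mul_le_mul_of_nonneg_right ?_ (abs_nonneg _)
        calc ∑ p : Fin m × Fin n, χ p.1 p.2 * (|A p.1 q.1| * |B q.2 p.2|)
            = ∑ i, ∑ j, χ i j * (|A i q.1| * |B q.2 j|) := Fintype.sum_prod_type _
          _ ≤ C := hS q.1 q.2
    _ = C * l1 M := by
        rw [← Finset.mul_sum, l1, Fintype.sum_prod_type]

set_option maxHeartbeats 1000000 in
/-- entrywise-ℓ1 contraction of `P_Ω ∘ P_T`. -/
theorem POmega_comp_PT_l1_contraction {m n r : ℕ} (Xs : Matrix (Fin m) (Fin n) ℝ)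
    (U : Matrix (Fin m) (Fin r) ℝ) (V : Matrix (Fin n) (Fin r) ℝ)
    (hU : Uᵀ * U = 1) (hV : Vᵀ * V = 1) (ρ : ℝ) (hρ : 0 < ρ)
    (M : Matrix (Fin m) (Fin n) ℝ) :
    l1 (POmega Xs (PT U V M)) ≤ alpha Xs ρ * beta U V ρ * l1 M := by
  rcases Nat.eq_zero_or_pos m with hm | hm
  · subst hm; simp [l1]
  rcases Nat.eq_zero_or_pos n with hn | hn
  · subst hn; simp [l1]
  let i0 : Fin m := ⟨0, hm⟩
  let j0 : Fin n := ⟨0, hn⟩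
  have hρne : ρ ≠ 0 := ne_of_gt hρ
  let χ : Fin m → Fin n → ℝ := fun i j => if Xs i j ≠ 0 then 1 else 0
  have hχ0 : ∀ i j, 0 ≤ χ i j := by
    intro i j; by_cases h : Xs i j = 0 <;> simp [χ, h]
  have hχmul : ∀ i j, χ i j * χ i j = χ i j := by
    intro i j; by_cases h : Xs i j = 0 <;> simp [χ, h]
  have hsign : ∀ i j, |signM Xs i j| = χ i j := by
    intro i j
    by_cases h : Xs i j = 0
    · simp [signM, χ, h]
    · rcases lt_or_gt_of_ne h with h' | h'
      · simp [signM, χ, h, Real.sign_of_neg h']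
      · simp [signM, χ, h, Real.sign_of_pos h']
  have hcol : ∀ j, ∑ i, χ i j ≤ n11 (signM Xs) := by
    intro j
    have h1 : ∑ i, χ i j = ∑ i, |signM Xs i j| :=
      Finset.sum_congr rfl fun i _ => (hsign i j).symm
    rw [h1]
    exact le_ciSup_fin (fun j => ∑ i, |signM Xs i j|) j
  have hrow : ∀ i, ∑ j, χ i j ≤ nII (signM Xs) := by
    intro i
    have h1 : ∑ j, χ i j = ∑ j, |signM Xs i j| :=
      Finset.sum_congr rfl fun j _ => (hsign i j).symm
    rw [h1]
    exact le_ciSup_fin (fun i => ∑ j, |signM Xs i j|) i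
  have ha : 0 ≤ n11 (signM Xs) :=
    le_trans (Finset.sum_nonneg fun i _ => hχ0 i j0) (hcol j0)
  have hb : 0 ≤ nII (signM Xs) :=
    le_trans (Finset.sum_nonneg fun j _ => hχ0 i0 j) (hrow i0)
  -- facts about U * Uᵀ and V * Vᵀ
  have hAsymm : ∀ i k, (U * Uᵀ) k i = (U * Uᵀ) i k := by
    intro i k; simp [Matrix.mul_apply, mul_comm]
  have hBsymm : ∀ x y, (V * Vᵀ) x y = (V * Vᵀ) y x := by
    intro x y; simp [Matrix.mul_apply, mul_comm]
  have hAA : U * Uᵀ * (U * Uᵀ) = U * Uᵀ := by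
    rw [Matrix.mul_assoc U Uᵀ (U * Uᵀ), ← Matrix.mul_assoc Uᵀ U Uᵀ, hU, Matrix.one_mul]
  have hBB : V * Vᵀ * (V * Vᵀ) = V * Vᵀ := by
    rw [Matrix.mul_assoc V Vᵀ (V * Vᵀ), ← Matrix.mul_assoc Vᵀ V Vᵀ, hV, Matrix.one_mul]
  have hUdiag : ∀ k, (U * Uᵀ) k k = ∑ t, (U k t) ^ 2 := by
    intro k; simp [Matrix.mul_apply, sq]
  have hVdiag : ∀ l, (V * Vᵀ) l l = ∑ t, (V l t) ^ 2 := by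
    intro l; simp [Matrix.mul_apply, sq]
  have htU2 : ∀ k : Fin m, ∑ t, (U k t) ^ 2 ≤ (two2inf U) ^ 2 := by
    intro k
    have h0 : 0 ≤ ∑ t, (U k t) ^ 2 := Finset.sum_nonneg fun t _ => sq_nonneg _
    have h2 : Real.sqrt (∑ t, (U k t) ^ 2) ≤ two2inf U :=
      le_ciSup_fin (fun i => Real.sqrt (∑ t, (U i t) ^ 2)) k
    calc ∑ t, (U k t) ^ 2 = Real.sqrt (∑ t, (U k t) ^ 2) ^ 2 := (Real.sq_sqrt h0).symm
      _ ≤ (two2inf U) ^ 2 := pow_le_pow_left₀ (Real.sqrt_nonneg _) h2 2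
  have htV2 : ∀ l : Fin n, ∑ t, (V l t) ^ 2 ≤ (two2inf V) ^ 2 := by
    intro l
    have h0 : 0 ≤ ∑ t, (V l t) ^ 2 := Finset.sum_nonneg fun t _ => sq_nonneg _
    have h2 : Real.sqrt (∑ t, (V l t) ^ 2) ≤ two2inf V :=
      le_ciSup_fin (fun i => Real.sqrt (∑ t, (V i t) ^ 2)) l
    calc ∑ t, (V l t) ^ 2 = Real.sqrt (∑ t, (V l t) ^ 2) ^ 2 := (Real.sq_sqrt h0).symm
      _ ≤ (two2inf V) ^ 2 := pow_le_pow_left₀ (Real.sqrt_nonneg _) h2 2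
  have hA2 : ∀ k, ∑ i, ((U * Uᵀ) i k) ^ 2 ≤ (two2inf U) ^ 2 := by
    intro k
    calc ∑ i, ((U * Uᵀ) i k) ^ 2 = ∑ i, (U * Uᵀ) k i * (U * Uᵀ) i k :=
          Finset.sum_congr rfl fun i _ => by rw [hAsymm i k, sq]
      _ = (U * Uᵀ * (U * Uᵀ)) k k := (Matrix.mul_apply).symm
      _ = (U * Uᵀ) k k := by rw [hAA]
      _ = ∑ t, (U k t) ^ 2 := hUdiag k
      _ ≤ (two2inf U) ^ 2 := htU2 k
  have hB2 : ∀ l, ∑ j, ((V * Vᵀ) l j) ^ 2 ≤ (two2inf V) ^ 2 := by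
    intro l
    calc ∑ j, ((V * Vᵀ) l j) ^ 2 = ∑ j, (V * Vᵀ) l j * (V * Vᵀ) j l :=
          Finset.sum_congr rfl fun j _ => by rw [sq, hBsymm l j]
      _ = (V * Vᵀ * (V * Vᵀ)) l l := (Matrix.mul_apply).symm
      _ = (V * Vᵀ) l l := by rw [hBB]
      _ = ∑ t, (V l t) ^ 2 := hVdiag l
      _ ≤ (two2inf V) ^ 2 := htV2 l
  have hAinf : ∀ i k, |(U * Uᵀ) i k| ≤ linf (U * Uᵀ) := by
    intro i k
    exact le_trans (le_ciSup_fin (fun k => |(U * Uᵀ) i k|) k)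
      (le_ciSup_fin (fun i => ⨆ k, |(U * Uᵀ) i k|) i)
  have hBinf : ∀ l j, |(V * Vᵀ) l j| ≤ linf (V * Vᵀ) := by
    intro l j
    exact le_trans (le_ciSup_fin (fun j => |(V * Vᵀ) l j|) j)
      (le_ciSup_fin (fun l => ⨆ j, |(V * Vᵀ) l j|) l)
  have hp0 : 0 ≤ linf (U * Uᵀ) := (abs_nonneg _).trans (hAinf i0 i0)
  have hq0 : 0 ≤ linf (V * Vᵀ) := (abs_nonneg _).trans (hBinf j0 j0)
  have htU0 : 0 ≤ two2inf U :=
    (Real.sqrt_nonneg _).trans (le_ciSup_fin (fun i => Real.sqrt (∑ t, (U i t) ^ 2)) i0)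
  have htV0 : 0 ≤ two2inf V :=
    (Real.sqrt_nonneg _).trans (le_ciSup_fin (fun i => Real.sqrt (∑ t, (V i t) ^ 2)) j0)
  have hl1 : 0 ≤ l1 M :=
    Finset.sum_nonneg fun i _ => Finset.sum_nonneg fun j _ => abs_nonneg _
  have hPO : ∀ i j, |POmega Xs (PT U V M) i j| = χ i j * |PT U V M i j| := by
    intro i j
    by_cases h : Xs i j = 0 <;> simp [POmega, χ, h]
  have hPT : ∀ i j, |PT U V M i j| ≤
      |(U * Uᵀ * M) i j| + |(M * (V * Vᵀ)) i j| + |(U * Uᵀ * M * (V * Vᵀ)) i j| := by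
    intro i j
    simp only [PT, Matrix.sub_apply, Matrix.add_apply]
    exact (abs_sub _ _).trans (add_le_add_left (abs_add_le _ _) _)
  -- scalar combination bound
  have hmaxa : ρ * n11 (signM Xs) ≤ alpha Xs ρ := le_max_left _ _
  have hmaxb : ρ⁻¹ * nII (signM Xs) ≤ alpha Xs ρ := le_max_right _ _
  have hα0 : 0 ≤ alpha Xs ρ := le_trans (mul_nonneg hρ.le ha) hmaxa
  have hsqrt : Real.sqrt (n11 (signM Xs)) * Real.sqrt (nII (signM Xs)) ≤ alpha Xs ρ := by
    rw [← Real.sqrt_mul ha]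
    have h1 : n11 (signM Xs) * nII (signM Xs) ≤ alpha Xs ρ * alpha Xs ρ := by
      have h2 := mul_le_mul hmaxa hmaxb (mul_nonneg (inv_nonneg.2 hρ.le) hb) hα0
      calc n11 (signM Xs) * nII (signM Xs)
          = (ρ * n11 (signM Xs)) * (ρ⁻¹ * nII (signM Xs)) := by
            field_simp
            try ring
        _ ≤ _ := h2
    calc Real.sqrt (n11 (signM Xs) * nII (signM Xs))
        ≤ Real.sqrt (alpha Xs ρ * alpha Xs ρ) := Real.sqrt_le_sqrt h1
      _ = alpha Xs ρ := Real.sqrt_mul_self hα0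
  have t1 : linf (U * Uᵀ) * n11 (signM Xs) ≤ alpha Xs ρ * (ρ⁻¹ * linf (U * Uᵀ)) := by
    have h2 := mul_le_mul_of_nonneg_right hmaxa (mul_nonneg (inv_nonneg.2 hρ.le) hp0)
    calc linf (U * Uᵀ) * n11 (signM Xs)
        = (ρ * n11 (signM Xs)) * (ρ⁻¹ * linf (U * Uᵀ)) := by
          field_simp
          try ring
      _ ≤ _ := h2
  have t2 : linf (V * Vᵀ) * nII (signM Xs) ≤ alpha Xs ρ * (ρ * linf (V * Vᵀ)) := by
    have h2 := mul_le_mul_of_nonneg_right hmaxb (mul_nonneg hρ.le hq0)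
    calc linf (V * Vᵀ) * nII (signM Xs)
        = (ρ⁻¹ * nII (signM Xs)) * (ρ * linf (V * Vᵀ)) := by
          field_simp
          try ring
      _ ≤ _ := h2
  have t3 : Real.sqrt (n11 (signM Xs)) * Real.sqrt (nII (signM Xs)) * (two2inf U * two2inf V)
      ≤ alpha Xs ρ * (two2inf U * two2inf V) :=
    mul_le_mul_of_nonneg_right hsqrt (mul_nonneg htU0 htV0)
  have hfin : linf (U * Uᵀ) * n11 (signM Xs) + linf (V * Vᵀ) * nII (signM Xs)
      + Real.sqrt (n11 (signM Xs)) * Real.sqrt (nII (signM Xs)) * (two2inf U * two2inf V)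
      ≤ alpha Xs ρ * beta U V ρ := by
    calc linf (U * Uᵀ) * n11 (signM Xs) + linf (V * Vᵀ) * nII (signM Xs)
        + Real.sqrt (n11 (signM Xs)) * Real.sqrt (nII (signM Xs)) * (two2inf U * two2inf V)
        ≤ alpha Xs ρ * (ρ⁻¹ * linf (U * Uᵀ)) + alpha Xs ρ * (ρ * linf (V * Vᵀ))
          + alpha Xs ρ * (two2inf U * two2inf V) := add_le_add (add_le_add t1 t2) t3
      _ = alpha Xs ρ * beta U V ρ := by rw [beta]; ring
  calc l1 (POmega Xs (PT U V M))
      = ∑ i, ∑ j, χ i j * |PT U V M i j| := by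
        simp only [l1]
        exact Finset.sum_congr rfl fun i _ => Finset.sum_congr rfl fun j _ => hPO i j
    _ ≤ ∑ i, ∑ j, (χ i j * |(U * Uᵀ * M) i j| + χ i j * |(M * (V * Vᵀ)) i j|
          + χ i j * |(U * Uᵀ * M * (V * Vᵀ)) i j|) := by
        refine Finset.sum_le_sum fun i _ => Finset.sum_le_sum fun j _ => ?_
        rw [← mul_add, ← mul_add]
        exact mul_le_mul_of_nonneg_left (hPT i j) (hχ0 i j)
    _ = (∑ i, ∑ j, χ i j * |(U * Uᵀ * M) i j|) + (∑ i, ∑ j, χ i j * |(M * (V * Vᵀ)) i j|)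
          + ∑ i, ∑ j, χ i j * |(U * Uᵀ * M * (V * Vᵀ)) i j| := by
        simp [Finset.sum_add_distrib]
    _ ≤ linf (U * Uᵀ) * n11 (signM Xs) * l1 M + linf (V * Vᵀ) * nII (signM Xs) * l1 M
          + Real.sqrt (n11 (signM Xs)) * Real.sqrt (nII (signM Xs))
            * (two2inf U * two2inf V) * l1 M := by
        refine add_le_add (add_le_add ?_ ?_) ?_
        · exact key1 χ (U * Uᵀ) M _ _ hχ0 hAinf hcol hp0
        · exact key2 χ (V * Vᵀ) M _ _ hχ0 hBinf hrow hq0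
        · exact key3 χ (U * Uᵀ) (V * Vᵀ) M _ _ _ _ hχmul hχ0 hA2 hB2 hcol hrow ha hb htU0 htV0
    _ = (linf (U * Uᵀ) * n11 (signM Xs) + linf (V * Vᵀ) * nII (signM Xs)
          + Real.sqrt (n11 (signM Xs)) * Real.sqrt (nII (signM Xs))
            * (two2inf U * two2inf V)) * l1 M := by ring
    _ ≤ alpha Xs ρ * beta U V ρ * l1 M := mul_le_mul_of_nonneg_right hfin hl1


end SLR
end
end
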